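/- Define a(n) = n(T_n(2) + 1) where T_n is the Chebyshev polynomial of the first kind. Then the generating function Σ_{n≥1} a(n) x^n is a rational function of x with integer coefficients that is invariant under x ↦ 1/x. -/

import Mathlib

theorem mobius_ladder_generating_function_rational
    (a : ℕ → ℤ) (ha : ∀ n, a n = n * ((Polynomial.Chebyshev.T ℤ n).eval 2 + 1)) :
    ∃ P Q : Polynomial ℤ, Q ≠ 0 ∧
      (PowerSeries.mk fun n => if n = 0 then 0 else a n) * (Q : PowerSeries ℤ) =
        (P : PowerSeries ℤ) ∧
      ∀ x : ℚ, x ≠ 0 →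
        (P.map (Int.castRingHom ℚ)).eval x * (Q.map (Int.castRingHom ℚ)).eval x⁻¹ =
          (P.map (Int.castRingHom ℚ)).eval x⁻¹ * (Q.map (Int.castRingHom ℚ)).eval x := by
  have a0 : a 0 = 0 := by simpa using ha 0
  have hb : (fun n => if n = 0 then (0:ℤ) else a n) = a := by
    funext n
    cases n with
    | zero => simp [a0]
    | succ n => simp
  -- integer-indexed Chebyshev recurrence at 2
  have hTz : ∀ z : ℤ, (Polynomial.Chebyshev.T ℤ (z+2)).eval 2
      = 4 * (Polynomial.Chebyshev.T ℤ (z+1)).eval 2 - (Polynomial.Chebyshev.T ℤ z).eval 2 := by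
    intro z
    rw [Polynomial.Chebyshev.T_add_two]
    simp
  -- small values
  have w0 : (Polynomial.Chebyshev.T ℤ 0).eval 2 = 1 := by
    simp [Polynomial.Chebyshev.T_zero]
  have w1 : (Polynomial.Chebyshev.T ℤ 1).eval 2 = 2 := by
    simp [Polynomial.Chebyshev.T_one]
  have w2 : (Polynomial.Chebyshev.T ℤ 2).eval 2 = 7 := by
    have := hTz 0; norm_num [w0, w1] at this; linarith
  have w3 : (Polynomial.Chebyshev.T ℤ 3).eval 2 = 26 := by
    have := hTz 1; norm_num [w1, w2] at this; linarith
  have w4 : (Polynomial.Chebyshev.T ℤ 4).eval 2 = 97 := by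
    have := hTz 2; norm_num [w2, w3] at this; linarith
  have w5 : (Polynomial.Chebyshev.T ℤ 5).eval 2 = 362 := by
    have := hTz 3; norm_num [w3, w4] at this; linarith
  have e1 : a 1 = 3 := by rw [ha]; norm_num [w1]
  have e2 : a 2 = 16 := by rw [ha]; norm_num [w2]
  have e3 : a 3 = 81 := by rw [ha]; norm_num [w3]
  have e4 : a 4 = 392 := by rw [ha]; norm_num [w4]
  have e5 : a 5 = 1815 := by rw [ha]; norm_num [w5]
  -- the order-6 recurrence
  have key : ∀ m : ℕ, a (m+6) - 10*a (m+5) + 35*a (m+4) - 52*a (m+3) + 35*a (m+2)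
      - 10*a (m+1) + a m = 0 := by
    intro m
    have h2 : (Polynomial.Chebyshev.T ℤ ((m:ℤ)+2)).eval 2
        = 4 * (Polynomial.Chebyshev.T ℤ ((m:ℤ)+1)).eval 2
          - (Polynomial.Chebyshev.T ℤ (m:ℤ)).eval 2 := hTz m
    have h3 : (Polynomial.Chebyshev.T ℤ ((m:ℤ)+3)).eval 2
        = 4 * (Polynomial.Chebyshev.T ℤ ((m:ℤ)+2)).eval 2
          - (Polynomial.Chebyshev.T ℤ ((m:ℤ)+1)).eval 2 := by
      have := hTz ((m:ℤ)+1)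
      rw [show (m:ℤ)+1+2 = (m:ℤ)+3 by ring, show (m:ℤ)+1+1 = (m:ℤ)+2 by ring] at this
      exact this
    have h4 : (Polynomial.Chebyshev.T ℤ ((m:ℤ)+4)).eval 2
        = 4 * (Polynomial.Chebyshev.T ℤ ((m:ℤ)+3)).eval 2
          - (Polynomial.Chebyshev.T ℤ ((m:ℤ)+2)).eval 2 := by
      have := hTz ((m:ℤ)+2)
      rw [show (m:ℤ)+2+2 = (m:ℤ)+4 by ring, show (m:ℤ)+2+1 = (m:ℤ)+3 by ring] at this
      exact this
    have h5 : (Polynomial.Chebyshev.T ℤ ((m:ℤ)+5)).eval 2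
        = 4 * (Polynomial.Chebyshev.T ℤ ((m:ℤ)+4)).eval 2
          - (Polynomial.Chebyshev.T ℤ ((m:ℤ)+3)).eval 2 := by
      have := hTz ((m:ℤ)+3)
      rw [show (m:ℤ)+3+2 = (m:ℤ)+5 by ring, show (m:ℤ)+3+1 = (m:ℤ)+4 by ring] at this
      exact this
    have h6 : (Polynomial.Chebyshev.T ℤ ((m:ℤ)+6)).eval 2
        = 4 * (Polynomial.Chebyshev.T ℤ ((m:ℤ)+5)).eval 2
          - (Polynomial.Chebyshev.T ℤ ((m:ℤ)+4)).eval 2 := by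
      have := hTz ((m:ℤ)+4)
      rw [show (m:ℤ)+4+2 = (m:ℤ)+6 by ring, show (m:ℤ)+4+1 = (m:ℤ)+5 by ring] at this
      exact this
    rw [ha m, ha (m+1), ha (m+2), ha (m+3), ha (m+4), ha (m+5), ha (m+6)]
    push_cast
    rw [h6, h5, h4, h3, h2]
    ring
  refine ⟨Polynomial.C 3 * Polynomial.X ^ 1 + Polynomial.C (-14) * Polynomial.X ^ 2 + Polynomial.C 26 * Polynomial.X ^ 3 + Polynomial.C (-14) * Polynomial.X ^ 4 + Polynomial.C 3 * Polynomial.X ^ 5,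
    Polynomial.C 1 * Polynomial.X ^ 0 + Polynomial.C (-10) * Polynomial.X ^ 1 + Polynomial.C 35 * Polynomial.X ^ 2 + Polynomial.C (-52) * Polynomial.X ^ 3 + Polynomial.C 35 * Polynomial.X ^ 4
      + Polynomial.C (-10) * Polynomial.X ^ 5 + Polynomial.C 1 * Polynomial.X ^ 6, ?_, ?_, ?_⟩
  · intro h
    have := congrArg (Polynomial.eval 0) h
    norm_num at this
  · rw [hb]
    have hco : ∀ (c : ℤ) (k d : ℕ),
        PowerSeries.coeff d (PowerSeries.mk a * (PowerSeries.C c * PowerSeries.X^k))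
          = if k ≤ d then c * a (d - k) else 0 := by
      intro c k d
      rw [mul_left_comm, PowerSeries.coeff_C_mul, PowerSeries.coeff_mul_X_pow']
      split <;> simp [PowerSeries.coeff_mk]
    have hQc : ((Polynomial.C 1 * Polynomial.X ^ 0 + Polynomial.C (-10) * Polynomial.X ^ 1 + Polynomial.C 35 * Polynomial.X ^ 2 + Polynomial.C (-52) * Polynomial.X ^ 3 + Polynomial.C 35 * Polynomial.X ^ 4
        + Polynomial.C (-10) * Polynomial.X ^ 5 + Polynomial.C 1 * Polynomial.X ^ 6 : Polynomial ℤ) : PowerSeries ℤ)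
        = PowerSeries.C 1 * PowerSeries.X ^ 0 + PowerSeries.C (-10) * PowerSeries.X ^ 1
          + PowerSeries.C 35 * PowerSeries.X ^ 2 + PowerSeries.C (-52) * PowerSeries.X ^ 3
          + PowerSeries.C 35 * PowerSeries.X ^ 4 + PowerSeries.C (-10) * PowerSeries.X ^ 5
          + PowerSeries.C 1 * PowerSeries.X ^ 6 := by
      simp only [Polynomial.coe_add, Polynomial.coe_mul, Polynomial.coe_pow, Polynomial.coe_C,
        Polynomial.coe_X]
    have hPc : ((Polynomial.C 3 * Polynomial.X ^ 1 + Polynomial.C (-14) * Polynomial.X ^ 2 + Polynomial.C 26 * Polynomial.X ^ 3 + Polynomial.C (-14) * Polynomial.X ^ 4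
        + Polynomial.C 3 * Polynomial.X ^ 5 : Polynomial ℤ) : PowerSeries ℤ)
        = PowerSeries.C 3 * PowerSeries.X ^ 1 + PowerSeries.C (-14) * PowerSeries.X ^ 2
          + PowerSeries.C 26 * PowerSeries.X ^ 3 + PowerSeries.C (-14) * PowerSeries.X ^ 4
          + PowerSeries.C 3 * PowerSeries.X ^ 5 := by
      simp only [Polynomial.coe_add, Polynomial.coe_mul, Polynomial.coe_pow, Polynomial.coe_C,
        Polynomial.coe_X]
    rw [hQc, hPc]
    ext n
    simp only [mul_add, map_add, hco, PowerSeries.coeff_C_mul, PowerSeries.coeff_X_pow]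
    rcases n with _ | _ | _ | _ | _ | _ | m
    · norm_num [a0]
    · norm_num [a0, e1]
    · norm_num [a0, e1, e2]
    · norm_num [a0, e1, e2, e3]
    · norm_num [a0, e1, e2, e3, e4]
    · norm_num [a0, e1, e2, e3, e4, e5]
    · have h6 : ∀ k, k ≤ 6 → k ≤ m + 1 + 1 + 1 + 1 + 1 + 1 := by omega
      rw [if_pos (h6 0 (by norm_num)), if_pos (h6 1 (by norm_num)),
        if_pos (h6 2 (by norm_num)), if_pos (h6 3 (by norm_num)),
        if_pos (h6 4 (by norm_num)), if_pos (h6 5 (by norm_num)),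
        if_pos (h6 6 (by norm_num))]
      have hx : ∀ k : ℕ, m + 1 + 1 + 1 + 1 + 1 + 1 - k = m + 6 - k := by intro k; rfl
      norm_num
      have := key m
      have c1 : m + 1 + 1 + 1 + 1 + 1 + 1 = m + 6 := by omega
      have c2 : m + 1 + 1 + 1 + 1 + 1 = m + 5 := by omega
      have c3 : m + 1 + 1 + 1 + 1 = m + 4 := by omega
      have c4 : m + 1 + 1 + 1 = m + 3 := by omega
      have c5 : m + 1 + 1 = m + 2 := by omega
      simp only [c1, c2, c3, c4, c5, show m+6-1 = m+5 from by omega,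
        show m+6-2 = m+4 from by omega, show m+6-3 = m+3 from by omega,
        show m+6-4 = m+2 from by omega, show m+6-5 = m+1 from by omega,
        show m+6-6 = m from by omega, show m+6-0 = m+6 from by omega]
      omega
  · intro x hx
    simp only [Polynomial.map_add, Polynomial.map_mul, Polynomial.map_pow, Polynomial.map_C,
      Polynomial.map_X, Polynomial.eval_add, Polynomial.eval_mul, Polynomial.eval_pow,
      Polynomial.eval_C, Polynomial.eval_X, Int.cast_ofNat, Int.cast_neg]
    field_simp
    ring
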